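/- Let φ : [0,∞) → [0,∞) be continuous, increasing and subadditive with φ(0) = 0 and linear growth with constant ν > 0 (φ(x) ≤ ν(x+1) for all x ≥ 0), let μ > 0, and let g : ℝ × ℝ^d → ℝ satisfy |g(y₁, z₁) − g(y₂, z₂)| ≤ μ|y₁ − y₂| + φ(‖z₁ − z₂‖) for all (y₁, z₁), (y₂, z₂). For m > max(μ, ν) define the lower approximation g̲_m(y, z) := inf{ g(a, b) + m(|y − a| + ‖z − b‖) : (a, b) ∈ ℚ × ℚ^d }. Then for every m > max(μ, ν): (i) g̲_m(y, z) is finite (the infimum is > −∞) for every (y, z); (ii) g̲_m is Lipschitz: |g̲_m(y₁, z₁) − g̲_m(y₂, z₂)| ≤ m(|y₁ − y₂| + ‖z₁ − z₂‖); (iii) g̲_m(y, z) ≤ g(y, z); (iv) g̲_m(y, z) is nondecreasing in m; and (v) for every (y, z), g̲_m(y, z) → g(y, z) as m → ∞. -/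

import Mathlib

/-- A vector in `ℝ^d` with the given rational coordinates. -/
noncomputable def ratVec (d : ℕ) (b : Fin d → ℚ) : EuclideanSpace ℝ (Fin d) :=
  WithLp.toLp 2 (fun i => (b i : ℝ))

/-- The set `{ g(a,b) + m (|y − a| + ‖z − b‖) : (a,b) ∈ ℚ × ℚ^d }` appearing in the
Lepeltier–San Martin approximations (2.1) and (2.2) of the paper. -/
def lowerApproxSet (d : ℕ) (g : ℝ → EuclideanSpace ℝ (Fin d) → ℝ) (m : ℝ)
    (y : ℝ) (z : EuclideanSpace ℝ (Fin d)) : Set ℝ :=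
  {r : ℝ | ∃ (a : ℚ) (b : Fin d → ℚ),
    r = g (a : ℝ) (ratVec d b) + m * (|y - (a : ℝ)| + ‖z - ratVec d b‖)}

/-- The Lepeltier–San Martin lower approximation `g̲_m` (equation (2.1) of the paper). -/
noncomputable def lowerApprox (d : ℕ) (g : ℝ → EuclideanSpace ℝ (Fin d) → ℝ) (m : ℝ)
    (y : ℝ) (z : EuclideanSpace ℝ (Fin d)) : ℝ :=
  sInf (lowerApproxSet d g m y z)

lemma lowerApproxSet_nonempty (d : ℕ) (g : ℝ → EuclideanSpace ℝ (Fin d) → ℝ) (m : ℝ)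
    (y : ℝ) (z : EuclideanSpace ℝ (Fin d)) : (lowerApproxSet d g m y z).Nonempty :=
  ⟨_, 0, 0, rfl⟩

lemma ratVec_dense (d : ℕ) (z : EuclideanSpace ℝ (Fin d)) {ε : ℝ} (hε : 0 < ε) :
    ∃ b : Fin d → ℚ, ‖z - ratVec d b‖ < ε := by
  set c : ℝ := ε / (Real.sqrt d + 1) with hc_def
  have hsd : (0:ℝ) ≤ Real.sqrt d := Real.sqrt_nonneg _
  have hc : 0 < c := div_pos hε (by positivity)
  choose b hb using fun i => exists_rat_near (z i) hc
  refine ⟨b, ?_⟩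
  have h1 : ‖z - ratVec d b‖ ≤ Real.sqrt (d * c ^ 2) := by
    rw [EuclideanSpace.norm_eq]
    apply Real.sqrt_le_sqrt
    have key : ∀ i : Fin d, ‖(z - ratVec d b) i‖ ^ 2 ≤ c ^ 2 := by
      intro i
      have h : (z - ratVec d b) i = z i - (b i : ℝ) := rfl
      rw [h, Real.norm_eq_abs]
      have := (hb i).le
      nlinarith [abs_nonneg (z i - (b i : ℝ))]
    calc ∑ i, ‖(z - ratVec d b) i‖ ^ 2 ≤ ∑ _i : Fin d, c ^ 2 :=
          Finset.sum_le_sum fun i _ => key i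
      _ = d * c ^ 2 := by simp [Finset.sum_const, mul_comm]
  have h2 : Real.sqrt (d * c ^ 2) = Real.sqrt d * c := by
    rw [Real.sqrt_mul (Nat.cast_nonneg d), Real.sqrt_sq hc.le]
  have h4 : (Real.sqrt d + 1) * c = ε := by
    rw [hc_def]; field_simp
  nlinarith

lemma lowerApproxSet_lb {d : ℕ} {μ ν : ℝ} {φ : ℝ → ℝ}
    (hφ_growth : ∀ x, 0 ≤ x → φ x ≤ ν * (x + 1))
    {g : ℝ → EuclideanSpace ℝ (Fin d) → ℝ}
    (hg : ∀ (y₁ y₂ : ℝ) (z₁ z₂ : EuclideanSpace ℝ (Fin d)),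
      |g y₁ z₁ - g y₂ z₂| ≤ μ * |y₁ - y₂| + φ ‖z₁ - z₂‖)
    {m : ℝ} (hmμ : μ ≤ m) (hmν : ν ≤ m)
    (y : ℝ) (z : EuclideanSpace ℝ (Fin d)) :
    ∀ r ∈ lowerApproxSet d g m y z, g y z - ν ≤ r := by
  rintro r ⟨a, b, rfl⟩
  have h1 := hg y (a : ℝ) z (ratVec d b)
  have h2 := hφ_growth ‖z - ratVec d b‖ (norm_nonneg _)
  have h3 : g y z - g (a : ℝ) (ratVec d b) ≤ μ * |y - (a : ℝ)| + φ ‖z - ratVec d b‖ :=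
    (le_abs_self _).trans h1
  nlinarith [abs_nonneg (y - (a:ℝ)), norm_nonneg (z - ratVec d b)]

lemma lowerApprox_shift {d : ℕ} {g : ℝ → EuclideanSpace ℝ (Fin d) → ℝ} {m : ℝ} (hm : 0 ≤ m)
    (y₁ y₂ : ℝ) (z₁ z₂ : EuclideanSpace ℝ (Fin d))
    (hbdd : BddBelow (lowerApproxSet d g m y₁ z₁)) :
    lowerApprox d g m y₁ z₁ ≤ lowerApprox d g m y₂ z₂ + m * (|y₁ - y₂| + ‖z₁ - z₂‖) := by
  rw [← sub_le_iff_le_add]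
  apply le_csInf (lowerApproxSet_nonempty d g m y₂ z₂)
  rintro r ⟨a, b, rfl⟩
  have h1 : lowerApprox d g m y₁ z₁ ≤
      g (a : ℝ) (ratVec d b) + m * (|y₁ - (a : ℝ)| + ‖z₁ - ratVec d b‖) :=
    csInf_le hbdd ⟨a, b, rfl⟩
  have h2 : |y₁ - (a : ℝ)| ≤ |y₁ - y₂| + |y₂ - (a : ℝ)| := abs_sub_le _ _ _
  have h3 : ‖z₁ - ratVec d b‖ ≤ ‖z₁ - z₂‖ + ‖z₂ - ratVec d b‖ := by
    calc ‖z₁ - ratVec d b‖ = ‖(z₁ - z₂) + (z₂ - ratVec d b)‖ := by rw [sub_add_sub_cancel]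
      _ ≤ ‖z₁ - z₂‖ + ‖z₂ - ratVec d b‖ := norm_add_le _ _
  nlinarith [norm_nonneg (z₁ - z₂), abs_nonneg (y₁ - y₂)]

lemma phi_small {φ : ℝ → ℝ} (hφ_cont : ContinuousOn φ (Set.Ici 0))
    (hφ_nonneg : ∀ x, 0 ≤ x → 0 ≤ φ x) (hφ0 : φ 0 = 0) {ε : ℝ} (hε : 0 < ε) :
    ∃ δ : ℝ, 0 < δ ∧ φ δ < ε := by
  have hc : ContinuousWithinAt φ (Set.Ici 0) 0 := hφ_cont 0 Set.self_mem_Ici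
  rw [Metric.continuousWithinAt_iff] at hc
  obtain ⟨δ', hδ', h⟩ := hc ε hε
  refine ⟨δ' / 2, by linarith, ?_⟩
  have hmem : δ' / 2 ∈ Set.Ici (0:ℝ) := by simp; linarith
  have hd : dist (δ' / 2) 0 < δ' := by
    rw [Real.dist_eq, sub_zero, abs_of_pos (by linarith)]; linarith
  have := h hmem hd
  rw [hφ0, Real.dist_eq, sub_zero, abs_of_nonneg (hφ_nonneg _ (by linarith))] at this
  exact this

/-- (iii): `g̲_m ≤ g` -/
lemma lowerApprox_le_g {d : ℕ} {μ ν : ℝ} (hμ : 0 < μ) {φ : ℝ → ℝ}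
    (hφ_cont : ContinuousOn φ (Set.Ici 0))
    (hφ_nonneg : ∀ x, 0 ≤ x → 0 ≤ φ x)
    (hφ_mono : ∀ a b, 0 ≤ a → a ≤ b → φ a ≤ φ b)
    (hφ0 : φ 0 = 0)
    (hφ_growth : ∀ x, 0 ≤ x → φ x ≤ ν * (x + 1))
    {g : ℝ → EuclideanSpace ℝ (Fin d) → ℝ}
    (hg : ∀ (y₁ y₂ : ℝ) (z₁ z₂ : EuclideanSpace ℝ (Fin d)),
      |g y₁ z₁ - g y₂ z₂| ≤ μ * |y₁ - y₂| + φ ‖z₁ - z₂‖)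
    {m : ℝ} (hmμ : μ ≤ m) (hmν : ν ≤ m) (hm : 0 ≤ m)
    (y : ℝ) (z : EuclideanSpace ℝ (Fin d)) :
    lowerApprox d g m y z ≤ g y z := by
  have hbdd : BddBelow (lowerApproxSet d g m y z) :=
    ⟨g y z - ν, lowerApproxSet_lb hφ_growth hg hmμ hmν y z⟩
  apply le_of_forall_pos_le_add
  intro ε hε
  obtain ⟨δ, hδ, hφδ⟩ := phi_small hφ_cont hφ_nonneg hφ0 (show (0:ℝ) < ε/2 by linarith)
  have hμε : 0 < 2 * (μ + 2 * m + 1) := by linarith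
  set η : ℝ := min δ (ε / (2 * (μ + 2 * m + 1))) with hη_def
  have hη : 0 < η := lt_min hδ (div_pos hε hμε)
  have hη1 : η ≤ δ := min_le_left _ _
  have hη2 : (2 * (μ + 2 * m + 1)) * η ≤ ε := by
    have := min_le_right δ (ε / (2 * (μ + 2 * m + 1)))
    calc (2 * (μ + 2 * m + 1)) * η ≤ (2 * (μ + 2 * m + 1)) * (ε / (2 * (μ + 2 * m + 1))) :=
          mul_le_mul_of_nonneg_left this hμε.le
      _ = ε := by field_simp
  obtain ⟨a, ha⟩ := exists_rat_near y hη
  obtain ⟨b, hb⟩ := ratVec_dense d z hη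
  have h0 : lowerApprox d g m y z ≤
      g (a : ℝ) (ratVec d b) + m * (|y - (a : ℝ)| + ‖z - ratVec d b‖) :=
    csInf_le hbdd ⟨a, b, rfl⟩
  have h1 : g (a : ℝ) (ratVec d b) - g y z ≤ μ * |y - (a : ℝ)| + φ ‖z - ratVec d b‖ :=
    calc g (a : ℝ) (ratVec d b) - g y z ≤ |g (a : ℝ) (ratVec d b) - g y z| := le_abs_self _
      _ = |g y z - g (a : ℝ) (ratVec d b)| := abs_sub_comm _ _
      _ ≤ μ * |y - (a : ℝ)| + φ ‖z - ratVec d b‖ := hg y (a : ℝ) z (ratVec d b)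
  have h2 : φ ‖z - ratVec d b‖ ≤ φ δ :=
    hφ_mono _ _ (norm_nonneg _) (le_of_lt (lt_of_lt_of_le hb hη1))
  have hA : |y - (a : ℝ)| < η := ha
  have hB : ‖z - ratVec d b‖ < η := hb
  have hA0 : 0 ≤ |y - (a : ℝ)| := abs_nonneg _
  have hB0 : 0 ≤ ‖z - ratVec d b‖ := norm_nonneg _
  nlinarith [mul_le_mul_of_nonneg_left hA.le hm, mul_le_mul_of_nonneg_left hB.le hm,
    mul_le_mul_of_nonneg_left hA.le hμ.le]

/-- fine lower bound for (v) -/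
lemma lowerApproxSet_lb_fine {d : ℕ} {μ ν : ℝ} (hμ : 0 < μ) (hν : 0 < ν) {φ : ℝ → ℝ}
    (hφ_nonneg : ∀ x, 0 ≤ x → 0 ≤ φ x)
    (hφ_mono : ∀ a b, 0 ≤ a → a ≤ b → φ a ≤ φ b)
    (hφ_growth : ∀ x, 0 ≤ x → φ x ≤ ν * (x + 1))
    {g : ℝ → EuclideanSpace ℝ (Fin d) → ℝ}
    (hg : ∀ (y₁ y₂ : ℝ) (z₁ z₂ : EuclideanSpace ℝ (Fin d)),
      |g y₁ z₁ - g y₂ z₂| ≤ μ * |y₁ - y₂| + φ ‖z₁ - z₂‖)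
    {m δ : ℝ} (hδ : 0 < δ) (hmμ : μ ≤ m) (hm : ν * (1 + 1/δ) ≤ m)
    (y : ℝ) (z : EuclideanSpace ℝ (Fin d)) :
    ∀ r ∈ lowerApproxSet d g m y z, g y z - φ δ ≤ r := by
  rintro r ⟨a, b, rfl⟩
  set A := |y - (a : ℝ)| with hA_def
  set B := ‖z - ratVec d b‖ with hB_def
  have hA0 : 0 ≤ A := abs_nonneg _
  have hB0 : 0 ≤ B := norm_nonneg _
  have h3 : g y z - g (a : ℝ) (ratVec d b) ≤ μ * A + φ B :=
    (le_abs_self _).trans (hg y (a : ℝ) z (ratVec d b))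
  have hm0 : 0 ≤ m := le_trans hμ.le hmμ
  rcases le_or_gt B δ with hBδ | hBδ
  · have h4 : φ B ≤ φ δ := hφ_mono _ _ hB0 hBδ
    nlinarith [mul_nonneg (sub_nonneg.2 hmμ) hA0, mul_nonneg hm0 hB0]
  · have h4 : φ B ≤ ν * (B + 1) := hφ_growth B hB0
    have h5 : ν ≤ ν / δ * B := by
      rw [div_mul_eq_mul_div, le_div_iff₀ hδ]
      nlinarith
    have h6 : φ B ≤ m * B := by
      have : ν * (1 + 1/δ) * B ≤ m * B := mul_le_mul_of_nonneg_right hm hB0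
      have hexp : ν * (1 + 1/δ) * B = ν * B + ν / δ * B := by ring
      nlinarith
    have h7 : 0 ≤ φ δ := hφ_nonneg δ hδ.le
    nlinarith

/-- Properties of the lower approximation `g̲_m`:
finiteness, `m`-Lipschitz continuity, `g̲_m ≤ g`, monotonicity in `m`, and pointwise
convergence `g̲_m → g` as `m → ∞`. -/
theorem stmt_2 (d : ℕ) (hd : 1 ≤ d) (μ ν : ℝ) (hμ : 0 < μ) (hν : 0 < ν)
    (φ : ℝ → ℝ)
    (hφ_cont : ContinuousOn φ (Set.Ici 0))
    (hφ_nonneg : ∀ x, 0 ≤ x → 0 ≤ φ x)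
    (hφ_mono : ∀ a b, 0 ≤ a → a ≤ b → φ a ≤ φ b)
    (hφ_subadd : ∀ a b, 0 ≤ a → 0 ≤ b → φ (a + b) ≤ φ a + φ b)
    (hφ0 : φ 0 = 0)
    (hφ_growth : ∀ x, 0 ≤ x → φ x ≤ ν * (x + 1))
    (g : ℝ → EuclideanSpace ℝ (Fin d) → ℝ)
    (hg : ∀ (y₁ y₂ : ℝ) (z₁ z₂ : EuclideanSpace ℝ (Fin d)),
      |g y₁ z₁ - g y₂ z₂| ≤ μ * |y₁ - y₂| + φ ‖z₁ - z₂‖) :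
    (∀ m, max μ ν < m →
      -- (i) finiteness of the infimum
      (∀ (y : ℝ) (z : EuclideanSpace ℝ (Fin d)), BddBelow (lowerApproxSet d g m y z)) ∧
      -- (ii) Lipschitz continuity with constant m
      (∀ (y₁ y₂ : ℝ) (z₁ z₂ : EuclideanSpace ℝ (Fin d)),
        |lowerApprox d g m y₁ z₁ - lowerApprox d g m y₂ z₂| ≤
          m * (|y₁ - y₂| + ‖z₁ - z₂‖)) ∧
      -- (iii) g̲_m ≤ g
      (∀ (y : ℝ) (z : EuclideanSpace ℝ (Fin d)), lowerApprox d g m y z ≤ g y z)) ∧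
    -- (iv) monotonicity in m
    (∀ m₁ m₂, max μ ν < m₁ → m₁ ≤ m₂ →
      ∀ (y : ℝ) (z : EuclideanSpace ℝ (Fin d)),
        lowerApprox d g m₁ y z ≤ lowerApprox d g m₂ y z) ∧
    -- (v) pointwise convergence as m → ∞
    (∀ (y : ℝ) (z : EuclideanSpace ℝ (Fin d)),
      Filter.Tendsto (fun m => lowerApprox d g m y z) Filter.atTop (nhds (g y z))) := by
  have hbdd : ∀ m, μ ≤ m → ν ≤ m →
      ∀ (y : ℝ) (z : EuclideanSpace ℝ (Fin d)), BddBelow (lowerApproxSet d g m y z) :=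
    fun m hmμ hmν y z => ⟨g y z - ν, lowerApproxSet_lb hφ_growth hg hmμ hmν y z⟩
  refine ⟨fun m hm => ?_, fun m₁ m₂ hm₁ h12 y z => ?_, fun y z => ?_⟩
  · have hmμ : μ ≤ m := le_of_lt (lt_of_le_of_lt (le_max_left _ _) hm)
    have hmν : ν ≤ m := le_of_lt (lt_of_le_of_lt (le_max_right _ _) hm)
    have hm0 : 0 ≤ m := le_trans hμ.le hmμ
    refine ⟨hbdd m hmμ hmν, fun y₁ y₂ z₁ z₂ => ?_, fun y z =>
      lowerApprox_le_g hμ hφ_cont hφ_nonneg hφ_mono hφ0 hφ_growth hg hmμ hmν hm0 y z⟩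
    rw [abs_sub_le_iff]
    constructor
    · have := lowerApprox_shift hm0 y₁ y₂ z₁ z₂ (hbdd m hmμ hmν y₁ z₁)
      linarith
    · have := lowerApprox_shift hm0 y₂ y₁ z₂ z₁ (hbdd m hmμ hmν y₂ z₂)
      rw [abs_sub_comm y₂ y₁, norm_sub_rev z₂ z₁] at this
      linarith
  · -- (iv)
    have hmμ : μ ≤ m₁ := le_of_lt (lt_of_le_of_lt (le_max_left _ _) hm₁)
    have hmν : ν ≤ m₁ := le_of_lt (lt_of_le_of_lt (le_max_right _ _) hm₁)
    apply le_csInf (lowerApproxSet_nonempty d g m₂ y z)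
    rintro r ⟨a, b, rfl⟩
    have h1 : lowerApprox d g m₁ y z ≤
        g (a : ℝ) (ratVec d b) + m₁ * (|y - (a : ℝ)| + ‖z - ratVec d b‖) :=
      csInf_le (hbdd m₁ hmμ hmν y z) ⟨a, b, rfl⟩
    have h2 : 0 ≤ |y - (a : ℝ)| + ‖z - ratVec d b‖ :=
      add_nonneg (abs_nonneg _) (norm_nonneg _)
    nlinarith
  · -- (v)
    rw [Metric.tendsto_atTop]
    intro ε hε
    obtain ⟨δ, hδ, hφδ⟩ := phi_small hφ_cont hφ_nonneg hφ0 (show (0:ℝ) < ε/2 by linarith)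
    refine ⟨max (max μ ν + 1) (ν * (1 + 1/δ)), fun m hmN => ?_⟩
    have hmax : max μ ν < m := by
      have := le_trans (le_max_left (max μ ν + 1) (ν * (1 + 1/δ))) hmN
      linarith
    have hmμ : μ ≤ m := le_of_lt (lt_of_le_of_lt (le_max_left _ _) hmax)
    have hmν : ν ≤ m := le_of_lt (lt_of_le_of_lt (le_max_right _ _) hmax)
    have hm0 : 0 ≤ m := le_trans hμ.le hmμ
    have hmfine : ν * (1 + 1/δ) ≤ m :=
      le_trans (le_max_right (max μ ν + 1) (ν * (1 + 1/δ))) hmN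
    have hup : lowerApprox d g m y z ≤ g y z :=
      lowerApprox_le_g hμ hφ_cont hφ_nonneg hφ_mono hφ0 hφ_growth hg hmμ hmν hm0 y z
    have hlo : g y z - φ δ ≤ lowerApprox d g m y z :=
      le_csInf (lowerApproxSet_nonempty d g m y z)
        (lowerApproxSet_lb_fine hμ hν hφ_nonneg hφ_mono hφ_growth hg hδ hmμ hmfine y z)
    rw [Real.dist_eq, abs_lt]
    constructor <;> linarith
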